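/- There exist a constant c > 0 and a threshold n₀ such that for all n ≥ n₀, the number A_n of isomorphism classes of circular-arc graphs on n vertices satisfies log₂ A_n ≥ n·log₂ n − c·n·log₂ log₂ n. -/

import Mathlib

/-- The setoid on graphs on `Fin n` satisfying a property `P`, identifying isomorphic graphs. -/
def graphIsoSetoid (n : ℕ) (P : SimpleGraph (Fin n) → Prop) :
    Setoid {G : SimpleGraph (Fin n) // P G} where
  r G H := Nonempty (G.val ≃g H.val)
  iseqv := ⟨fun _ => ⟨SimpleGraph.Iso.refl⟩, fun ⟨e⟩ => ⟨e.symm⟩,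
    fun ⟨e⟩ ⟨f⟩ => ⟨e.trans f⟩⟩

/-- The number of isomorphism classes of graphs on `Fin n` satisfying `P`. -/
noncomputable def numIsoClasses (n : ℕ) (P : SimpleGraph (Fin n) → Prop) : ℕ :=
  Nat.card (Quotient (graphIsoSetoid n P))

/-- The point of the unit circle with angle `θ`. -/
noncomputable def unitCirclePt (θ : ℝ) : ℝ × ℝ := (Real.cos θ, Real.sin θ)

/-- `A` is a closed arc of the unit circle. -/
def IsClosedArc (A : Set (ℝ × ℝ)) : Prop :=
  ∃ α β : ℝ, α ≤ β ∧ β - α < 2 * Real.pi ∧ A = unitCirclePt '' Set.Icc α β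

/-- `G` is a circular-arc graph: an intersection graph of closed arcs of the unit circle. -/
def IsCircularArcGraph {n : ℕ} (G : SimpleGraph (Fin n)) : Prop :=
  ∃ A : Fin n → Set (ℝ × ℝ), (∀ v, IsClosedArc (A v)) ∧
    ∀ u v : Fin n, u ≠ v → (G.Adj u v ↔ (A u ∩ A v).Nonempty)

namespace CAaux

/-! ### Interval graphs are circular-arc graphs -/

def intervalGraph {n : ℕ} (l r : Fin n → ℝ) : SimpleGraph (Fin n) where
  Adj u v := u ≠ v ∧ (Set.Icc (l u) (r u) ∩ Set.Icc (l v) (r v)).Nonempty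
  symm := ⟨fun u v h => ⟨h.1.symm, by rw [Set.inter_comm]; exact h.2⟩⟩
  loopless := ⟨fun v h => h.1 rfl⟩

lemma intervalGraph_adj {n : ℕ} (l r : Fin n → ℝ) (u v : Fin n) :
    (intervalGraph l r).Adj u v ↔
      u ≠ v ∧ (Set.Icc (l u) (r u) ∩ Set.Icc (l v) (r v)).Nonempty := Iff.rfl

lemma unitCirclePt_injOn : Set.InjOn unitCirclePt (Set.Icc (0:ℝ) 2) := by
  intro x hx y hy h
  have hc : Real.cos x = Real.cos y := congrArg Prod.fst h
  have hs : Real.sin x = Real.sin y := congrArg Prod.snd h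
  have h1 : Real.cos (x - y) = 1 := by
    rw [Real.cos_sub, hc, hs]
    nlinarith [Real.sin_sq_add_cos_sq y]
  have hpi := Real.pi_gt_three
  have h0 : x - y = 0 := by
    refine (Real.cos_eq_one_iff_of_lt_of_lt ?_ ?_).1 h1
    · obtain ⟨hx1, hx2⟩ := hx; obtain ⟨hy1, hy2⟩ := hy; linarith
    · obtain ⟨hx1, hx2⟩ := hx; obtain ⟨hy1, hy2⟩ := hy; linarith
  linarith

lemma isCircularArcGraph_intervalGraph {n : ℕ} (l r : Fin n → ℝ)
    (h0 : ∀ v, 0 ≤ l v) (hlr : ∀ v, l v ≤ r v) (h2 : ∀ v, r v ≤ 2) :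
    IsCircularArcGraph (intervalGraph l r) := by
  have hpi := Real.pi_gt_three
  refine ⟨fun v => unitCirclePt '' Set.Icc (l v) (r v),
    fun v => ⟨l v, r v, hlr v, by have := h0 v; have := h2 v; linarith, rfl⟩, ?_⟩
  intro u v huv
  constructor
  · rintro ⟨-, x, hx⟩
    exact ⟨unitCirclePt x, ⟨x, hx.1, rfl⟩, ⟨x, hx.2, rfl⟩⟩
  · rintro ⟨p, ⟨x, hx, rfl⟩, ⟨y, hy, hxy⟩⟩
    have hxI : x ∈ Set.Icc (0:ℝ) 2 := ⟨le_trans (h0 u) hx.1, le_trans hx.2 (h2 u)⟩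
    have hyI : y ∈ Set.Icc (0:ℝ) 2 := ⟨le_trans (h0 v) hy.1, le_trans hy.2 (h2 v)⟩
    have hyx : y = x := unitCirclePt_injOn hyI hxI hxy
    exact ⟨huv, x, hx, hyx ▸ hy⟩

/-! ### The family of interval graphs encoding `F : Fin (n - 2k) → Fin k × Fin k` -/

noncomputable def lf (n k : ℕ) (F : Fin (n - 2*k) → Fin k × Fin k) (i : Fin n) : ℝ :=
  if h : (i : ℕ) < 2*k then (1 + (i:ℕ)) / n
  else (1 + ((F ⟨(i:ℕ) - 2*k, by have := i.isLt; omega⟩).1 : ℕ)) / n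

noncomputable def rf (n k : ℕ) (F : Fin (n - 2*k) → Fin k × Fin k) (i : Fin n) : ℝ :=
  if h : (i : ℕ) < 2*k then (1 + (i:ℕ)) / n
  else (1 + k + ((F ⟨(i:ℕ) - 2*k, by have := i.isLt; omega⟩).2 : ℕ)) / n

variable {n k : ℕ}

lemma lf_nonneg (F : Fin (n - 2*k) → Fin k × Fin k) (i : Fin n) : 0 ≤ lf n k F i := by
  unfold lf; split <;> positivity

lemma lf_le_rf (F : Fin (n - 2*k) → Fin k × Fin k) (i : Fin n) : lf n k F i ≤ rf n k F i := by
  unfold lf rf; split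
  · exact le_refl _
  · rename_i h
    have ha := (F ⟨(i:ℕ) - 2*k, by have := i.isLt; omega⟩).1.isLt
    have hn' : (0:ℝ) < n := by exact_mod_cast i.pos
    apply div_le_div_of_nonneg_right ?_ hn'.le |>.trans_eq rfl
    have h2 : 1 + ((F ⟨(i:ℕ) - 2*k, by have := i.isLt; omega⟩).1 : ℕ) ≤
        1 + k + ((F ⟨(i:ℕ) - 2*k, by have := i.isLt; omega⟩).2 : ℕ) := by omega
    exact_mod_cast h2

lemma rf_le_two (F : Fin (n - 2*k) → Fin k × Fin k) (hkn : 2*k ≤ n) (hn : 0 < n) (i : Fin n) :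
    rf n k F i ≤ 2 := by
  have hn' : (0:ℝ) < n := by exact_mod_cast hn
  unfold rf; split
  · rename_i h
    rw [div_le_iff₀ hn']
    have : ((i:ℕ):ℝ) + 1 ≤ n := by exact_mod_cast Nat.succ_le_of_lt i.isLt
    nlinarith
  · rename_i h
    rw [div_le_iff₀ hn']
    have hb := (F ⟨(i:ℕ) - 2*k, by have := i.isLt; omega⟩).2.isLt
    have : (1:ℝ) + k + ((F ⟨(i:ℕ) - 2*k, by have := i.isLt; omega⟩).2 : ℕ) ≤ n := by
      have h2 : 1 + k + ((F ⟨(i:ℕ) - 2*k, by have := i.isLt; omega⟩).2 : ℕ) ≤ n := by omega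
      exact_mod_cast h2
    nlinarith

lemma chooser_marker_adj (F : Fin (n - 2*k) → Fin k × Fin k) (j : Fin (n - 2*k))
    (u : Fin n) (hu : (u:ℕ) < 2*k) :
    (Set.Icc (lf n k F ⟨2*k + (j:ℕ), by have := j.isLt; omega⟩)
        (rf n k F ⟨2*k + (j:ℕ), by have := j.isLt; omega⟩) ∩
      Set.Icc (lf n k F u) (rf n k F u)).Nonempty ↔
    ((F j).1 : ℕ) ≤ (u:ℕ) ∧ (u:ℕ) ≤ k + ((F j).2 : ℕ) := by
  have hn' : (0:ℝ) < n := by exact_mod_cast u.pos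
  have hc : ¬ ((⟨2*k + (j:ℕ), by have := j.isLt; omega⟩ : Fin n) : ℕ) < 2*k := by simp
  rw [lf, rf, dif_neg hc, dif_neg hc, lf, rf, dif_pos hu, dif_pos hu]
  have hidx : (⟨((⟨2*k + (j:ℕ), by have := j.isLt; omega⟩ : Fin n) : ℕ) - 2*k,
      by have := j.isLt; simp⟩ : Fin (n - 2*k)) = j := by
    apply Fin.ext; simp
  rw [hidx]
  rw [Set.Icc_self, Set.inter_comm, Set.singleton_inter_nonempty, Set.mem_Icc]
  rw [div_le_div_iff_of_pos_right hn', div_le_div_iff_of_pos_right hn']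
  constructor
  · rintro ⟨h1, h2⟩
    constructor
    · have : (((F j).1 : ℕ):ℝ) ≤ ((u:ℕ):ℝ) := by linarith
      exact_mod_cast this
    · have : ((u:ℕ):ℝ) ≤ (k:ℝ) + (((F j).2 : ℕ):ℝ) := by linarith
      exact_mod_cast this
  · rintro ⟨h1, h2⟩
    have h1' : (((F j).1 : ℕ):ℝ) ≤ (u:ℕ) := by exact_mod_cast h1
    have h2' : ((u:ℕ):ℝ) ≤ (k:ℝ) + (((F j).2 : ℕ):ℝ) := by exact_mod_cast h2
    constructor <;> linarith

noncomputable def gr (n k : ℕ) (F : Fin (n - 2*k) → Fin k × Fin k) : SimpleGraph (Fin n) :=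
  intervalGraph (lf n k F) (rf n k F)

lemma gr_adj_marker (hkn : 2*k ≤ n) (F : Fin (n - 2*k) → Fin k × Fin k)
    (j : Fin (n - 2*k)) (u : Fin n) (hu : (u:ℕ) < 2*k) :
    (gr n k F).Adj ⟨2*k + (j:ℕ), by have := j.isLt; omega⟩ u ↔
      ((F j).1 : ℕ) ≤ (u:ℕ) ∧ (u:ℕ) ≤ k + ((F j).2 : ℕ) := by
  rw [gr, intervalGraph_adj, chooser_marker_adj F j u hu]
  have hne : (⟨2*k + (j:ℕ), by have := j.isLt; omega⟩ : Fin n) ≠ u := by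
    intro hh
    have : 2*k + (j:ℕ) = (u:ℕ) := by rw [← hh]
    omega
  tauto

lemma gr_inj (hkn : 2*k ≤ n) :
    Function.Injective (fun F : Fin (n - 2*k) → Fin k × Fin k => gr n k F) := by
  intro F F' h
  funext j
  have key : ∀ (u : Fin n), (u:ℕ) < 2*k →
      ((((F j).1 : ℕ) ≤ (u:ℕ) ∧ (u:ℕ) ≤ k + ((F j).2 : ℕ)) ↔
       (((F' j).1 : ℕ) ≤ (u:ℕ) ∧ (u:ℕ) ≤ k + ((F' j).2 : ℕ))) := by
    intro u hu
    rw [← gr_adj_marker hkn F j u hu, ← gr_adj_marker hkn F' j u hu]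
    simp only at h; rw [h]
  have hk : 0 < k := (F j).1.pos
  have h1 := key ⟨((F' j).1 : ℕ), by have := (F' j).1.isLt; omega⟩
    (by simp; have := (F' j).1.isLt; omega)
  have h2 := key ⟨((F j).1 : ℕ), by have := (F j).1.isLt; omega⟩
    (by simp; have := (F j).1.isLt; omega)
  simp only [Fin.val_mk] at h1 h2
  have hb := (F j).2.isLt
  have hb' := (F' j).2.isLt
  have ha := (F j).1.isLt
  have ha' := (F' j).1.isLt
  have e1 : ((F j).1 : ℕ) = ((F' j).1 : ℕ) := by
    have c1 := h1.mpr ⟨le_refl _, by omega⟩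
    have c2 := h2.mp ⟨le_refl _, by omega⟩
    omega
  have g1 := key ⟨k + ((F' j).2 : ℕ), by omega⟩ (by simp; omega)
  have g2 := key ⟨k + ((F j).2 : ℕ), by omega⟩ (by simp; omega)
  simp only [Fin.val_mk] at g1 g2
  have e2 : ((F j).2 : ℕ) = ((F' j).2 : ℕ) := by
    have c1 := g1.mpr ⟨by omega, le_refl _⟩
    have c2 := g2.mp ⟨by omega, le_refl _⟩
    omega
  exact Prod.ext (Fin.ext e1) (Fin.ext e2)

lemma isCircularArcGraph_gr (hkn : 2*k ≤ n) (hn : 0 < n)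
    (F : Fin (n - 2*k) → Fin k × Fin k) : IsCircularArcGraph (gr n k F) :=
  isCircularArcGraph_intervalGraph _ _ (lf_nonneg F) (lf_le_rf F) (rf_le_two F hkn hn)

/-! ### Counting: each isomorphism class contains at most `n!` labeled graphs -/

lemma le_card_quotient_mul {n : ℕ} (P : SimpleGraph (Fin n) → Prop)
    {I : Type} (G : I → SimpleGraph (Fin n)) (hP : ∀ i, P (G i))
    (hinj : Function.Injective G) :
    Nat.card I ≤ numIsoClasses n P * n.factorial := by
  classical
  set Q := Quotient (graphIsoSetoid n P)
  let q : I → Q := fun i => Quotient.mk (graphIsoSetoid n P) ⟨G i, hP i⟩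
  have hiso : ∀ i, Nonempty ((G i) ≃g ((q i).out).val) := by
    intro i
    have : Quotient.mk (graphIsoSetoid n P) ⟨G i, hP i⟩
        = Quotient.mk (graphIsoSetoid n P) (q i).out := by
      rw [Quotient.out_eq]
    exact Quotient.exact this
  let e : (i : I) → (G i) ≃g ((q i).out).val := fun i => Classical.choice (hiso i)
  let Φ : I → Q × Equiv.Perm (Fin n) := fun i => (q i, (e i).toEquiv)
  have hΦ : Function.Injective Φ := by
    intro i i' hii
    have hq : q i = q i' := congrArg Prod.fst hii
    have hperm : (e i).toEquiv = (e i').toEquiv := congrArg Prod.snd hii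
    have hG : G i = G i' := by
      ext u v
      have h1 := (e i).map_adj_iff (v := u) (w := v)
      have h2 := (e i').map_adj_iff (v := u) (w := v)
      rw [← h1, ← h2]
      have : ∀ w, (e i) w = (e i') w := by
        intro w
        have := congrArg (fun f => f w) (congrArg DFunLike.coe hperm)
        simpa using this
      rw [this u, this v, hq]
    exact hinj hG
  have hcard := Nat.card_le_card_of_injective Φ hΦ
  rwa [Nat.card_prod, Nat.card_eq_fintype_card (α := Equiv.Perm (Fin n)),
    Fintype.card_perm, Fintype.card_fin] at hcard

/-! ### Auxiliary numeric lemmas -/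

lemma eight_mul_le_two_pow : ∀ L : ℕ, 6 ≤ L → 8*L ≤ 2^L := by
  intro L hL
  induction L with
  | zero => omega
  | succ M ih =>
    rcases Nat.lt_or_ge M 6 with h | h
    · interval_cases M <;> simp_all <;> omega
    · have := ih (by omega)
      have h2 : 8 ≤ 2^M := by
        calc 8 ≤ 8*M := by omega
        _ ≤ 2^M := this
      have : 2^(M+1) = 2^M + 2^M := by ring
      omega

lemma two_mul_le_two_pow : ∀ L : ℕ, 1 ≤ L → 2*L ≤ 2^L := by
  intro L hL
  induction L with
  | zero => omega
  | succ M ih =>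
    rcases Nat.lt_or_ge M 1 with h | h
    · interval_cases M <;> norm_num
    · have := ih (by omega)
      have h2 : 2 ≤ 2^M := by
        calc 2 ≤ 2*M := by omega
        _ ≤ 2^M := this
      have : 2^(M+1) = 2^M + 2^M := by ring
      omega

end CAaux

set_option maxHeartbeats 1600000 in
/-- There is a constant `c > 0` such that for all sufficiently large `n`, the number `A_n` of
isomorphism classes of circular-arc graphs on `n` vertices satisfies
`log₂ A_n ≥ n log₂ n − c n log₂ log₂ n`. -/
theorem stmt3 :
    ∃ c : ℝ, 0 < c ∧ ∃ n₀ : ℕ, ∀ n : ℕ, n₀ ≤ n →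
      Real.logb 2 (numIsoClasses n IsCircularArcGraph) ≥
        (n : ℝ) * Real.logb 2 n - c * n * Real.logb 2 (Real.logb 2 n) := by
  classical
  refine ⟨10, by norm_num, 2^100, ?_⟩
  intro n hn
  set L := Nat.log 2 n with hLdef
  set k := n / (2*L) with hkdef
  have hn1 : 1 ≤ n := le_trans (by norm_num) hn
  have hn0 : n ≠ 0 := by omega
  have hL100 : 100 ≤ L := (Nat.le_log_iff_pow_le (by norm_num) hn0).2 hn
  clear hn
  have hpowL : 2^L ≤ n := Nat.pow_log_le_self 2 hn0
  have h2L : 2*L ≤ n := le_trans (CAaux.two_mul_le_two_pow L (by omega)) hpowL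
  have h8L : 8*L ≤ n := le_trans (CAaux.eight_mul_le_two_pow L (by omega)) hpowL
  have hk1 : 1 ≤ k := (Nat.one_le_div_iff (by omega)).2 h2L
  have hkn : 2*k ≤ n := by
    have h1 : k ≤ n/2 := Nat.div_le_div_left (by omega) (by omega)
    have h2 := Nat.div_mul_le_self n 2
    omega
  set m := n - 2*k with hmdef
  set A := numIsoClasses n IsCircularArcGraph with hAdef
  -- the combinatorial bound
  have hcomb : (k*k)^m ≤ A * n.factorial := by
    have hcard := CAaux.le_card_quotient_mul IsCircularArcGraph
      (fun F : Fin (n - 2*k) → Fin k × Fin k => CAaux.gr n k F)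
      (fun F => CAaux.isCircularArcGraph_gr hkn (by omega) F)
      (CAaux.gr_inj hkn)
    simp only [Nat.card_eq_fintype_card, Fintype.card_fun, Fintype.card_prod,
      Fintype.card_fin] at hcard
    exact hcard
  have hkk : 0 < k*k := Nat.mul_pos (by omega) (by omega)
  have hk2m_pos : 1 ≤ (k*k)^m := Nat.one_le_pow _ _ hkk
  have hA1 : 1 ≤ A := by
    by_contra hA
    have h0 : A = 0 := by omega
    rw [h0, zero_mul] at hcomb
    omega
  clear_value L k m A
  -- real set-up
  have hnR : (0:ℝ) < n := by exact_mod_cast (by omega : 0 < n)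
  have hkR : (0:ℝ) < k := by exact_mod_cast (by omega : 0 < k)
  have hAR : (1:ℝ) ≤ A := by exact_mod_cast hA1
  have hfacR : (1:ℝ) ≤ (n.factorial : ℝ) := by exact_mod_cast n.factorial_pos
  set X := Real.logb 2 n with hXdef
  set Y := Real.logb 2 X with hYdef
  clear_value X Y
  have hLX : (L:ℝ) ≤ X := by
    rw [hLdef, hXdef]
    exact_mod_cast Real.natLog_le_logb n 2
  have hXL : X ≤ (L:ℝ) + 1 := by
    rw [hLdef, hXdef]
    have h' : (n:ℝ) ≤ (2:ℝ)^(Nat.log 2 n + 1) := by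
      exact_mod_cast (Nat.lt_pow_succ_log_self (b := 2) (by norm_num) n).le
    calc Real.logb 2 (n:ℝ) ≤ Real.logb 2 ((2:ℝ)^(Nat.log 2 n + 1)) :=
          Real.logb_le_logb_of_le (by norm_num) hnR h'
      _ = (Nat.log 2 n:ℝ)+1 := by
          rw [Real.logb_pow, Real.logb_self_eq_one (by norm_num)]; push_cast; ring
  have hX100 : (100:ℝ) ≤ X := by
    have : ((100:ℕ):ℝ) ≤ (L:ℝ) := by exact_mod_cast hL100
    push_cast at this; linarith
  have hXpos : (0:ℝ) < X := by linarith
  have hY1 : (1:ℝ) ≤ Y := by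
    rw [hYdef]
    have h : Real.logb 2 2 ≤ Real.logb 2 X :=
      Real.logb_le_logb_of_le (by norm_num) (by norm_num) (by linarith)
    rwa [Real.logb_self_eq_one (by norm_num)] at h
  -- Y + 2 ≤ X  via  log X ≤ 2 √X - 2
  have hYX : Y + 2 ≤ X := by
    have hXs : (0:ℝ) < Real.sqrt X := Real.sqrt_pos.2 hXpos
    have hs10 : (10:ℝ) ≤ Real.sqrt X := by
      nlinarith [Real.sq_sqrt hXpos.le, Real.sqrt_nonneg X]
    have hlog : Real.log X ≤ 2 * Real.sqrt X - 2 := by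
      have := Real.log_le_sub_one_of_pos hXs
      rw [Real.log_sqrt hXpos.le] at this
      linarith
    have hl2 : (0.6931471803:ℝ) < Real.log 2 := Real.log_two_gt_d9
    have hYe : Y = Real.log X / Real.log 2 := by rw [hYdef, Real.logb]
    have hd : Real.log X / Real.log 2 ≤ X - 2 := by
      rw [div_le_iff₀ (by linarith : (0:ℝ) < Real.log 2)]
      nlinarith [Real.sq_sqrt hXpos.le]
    rw [hYe]
    linarith
  -- lower bound for k
  have hkub : (n:ℝ) < 2*(L:ℝ)*(k:ℝ) + 2*(L:ℝ) := by
    have e := Nat.div_add_mod n (2*L)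
    rw [← hkdef] at e
    have hr := Nat.mod_lt n (show 0 < 2*L by omega)
    have eR : 2*(L:ℝ)*(k:ℝ) + ((n % (2*L) : ℕ):ℝ) = n := by exact_mod_cast e
    have hrR : ((n % (2*L) : ℕ):ℝ) < 2*(L:ℝ) := by exact_mod_cast hr
    linarith
  have hLpos : (0:ℝ) < L := by
    have : (0:ℕ) < L := by omega
    exact_mod_cast this
  have hk2X : (n:ℝ)/(2*X) - 1 ≤ k := by
    have h1 : (n:ℝ)/(2*L) ≤ k + 1 := by
      rw [div_le_iff₀ (by positivity)]
      nlinarith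
    have h2 : (n:ℝ)/(2*X) ≤ (n:ℝ)/(2*L) := by
      apply div_le_div_of_nonneg_left hnR.le (by positivity)
      linarith
    linarith
  have hn4X : 4*X ≤ (n:ℝ) := by
    have h8 : (8*L:ℝ) ≤ n := by exact_mod_cast h8L
    push_cast at h8
    linarith
  have hk4X : (n:ℝ)/(4*X) ≤ k := by
    have h1 : (1:ℝ) ≤ (n:ℝ)/(4*X) := by
      rw [le_div_iff₀ (by positivity)]; linarith
    have h2 : (n:ℝ)/(2*X) = 2 * ((n:ℝ)/(4*X)) := by ring
    linarith
  -- lower bound for logb k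
  have hK : X - Y - 2 ≤ Real.logb 2 k := by
    have h1 : Real.logb 2 ((n:ℝ)/(4*X)) ≤ Real.logb 2 k :=
      Real.logb_le_logb_of_le (by norm_num)
        (div_pos hnR (by linarith)) hk4X
    have h2 : Real.logb 2 ((n:ℝ)/(4*X)) = X - (2 + Y) := by
      rw [Real.logb_div hnR.ne' (by intro hc; nlinarith),
        Real.logb_mul (by norm_num) hXpos.ne']
      have h4 : Real.logb 2 (4:ℝ) = 2 := by
        rw [show (4:ℝ) = 2^(2:ℕ) by norm_num, Real.logb_pow,
          Real.logb_self_eq_one (by norm_num)]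
        norm_num
      rw [h4, ← hXdef, ← hYdef]
    linarith
  -- lower bound for m
  have h2kL : 2*k ≤ n/L := by
    have e1 : k = n/L/2 := by
      rw [hkdef, mul_comm, Nat.div_div_eq_div_mul]
    omega
  have hmX : (n:ℝ) - 2*(n:ℝ)/X ≤ m := by
    have hmR : (m:ℝ) = (n:ℝ) - 2*k := by
      rw [hmdef]
      push_cast [Nat.cast_sub hkn]
      ring
    have h1 : ((2*k:ℕ):ℝ) ≤ ((n/L:ℕ):ℝ) := by exact_mod_cast h2kL
    have h2 : ((n/L:ℕ):ℝ) ≤ (n:ℝ)/L := Nat.cast_div_le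
    have h3 : (n:ℝ)/L ≤ (n:ℝ)/(X/2) := by
      apply div_le_div_of_nonneg_left hnR.le (by positivity)
      linarith
    have h4 : (n:ℝ)/(X/2) = 2*(n:ℝ)/X := by ring
    push_cast at h1
    linarith
  -- logb of the combinatorial bound
  have hcombR : (((k*k)^m : ℕ):ℝ) ≤ (A:ℝ) * (n.factorial:ℝ) := by exact_mod_cast hcomb
  have hlog1 : Real.logb 2 (((k*k)^m : ℕ):ℝ) ≤ Real.logb 2 A + Real.logb 2 (n.factorial) := by
    have := Real.logb_le_logb_of_le (b := 2) (by norm_num)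
      (show (0:ℝ) < (((k*k)^m : ℕ):ℝ) by exact_mod_cast hk2m_pos) hcombR
    rwa [Real.logb_mul (by linarith) (by linarith)] at this
  have hlog2 : Real.logb 2 (((k*k)^m : ℕ):ℝ) = 2*(m:ℝ) * Real.logb 2 k := by
    have : (((k*k)^m : ℕ):ℝ) = ((k:ℝ)*(k:ℝ))^(m:ℕ) := by push_cast; ring
    rw [this, Real.logb_pow, Real.logb_mul (by positivity) (by positivity)]
    ring
  have hfact : Real.logb 2 (n.factorial) ≤ (n:ℝ) * X := by
    have h1 : (n.factorial:ℝ) ≤ ((n^n : ℕ):ℝ) := by exact_mod_cast n.factorial_le_pow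
    have h2 : Real.logb 2 (n.factorial:ℝ) ≤ Real.logb 2 (((n^n : ℕ)):ℝ) :=
      Real.logb_le_logb_of_le (by norm_num) (by exact_mod_cast n.factorial_pos) h1
    have h3 : Real.logb 2 (((n^n : ℕ)):ℝ) = (n:ℝ) * X := by
      have : (((n^n : ℕ)):ℝ) = (n:ℝ)^(n:ℕ) := by push_cast; ring
      rw [this, Real.logb_pow, ← hXdef]
    linarith
  -- put everything together
  have hKub : Real.logb 2 k ≤ X := by
    rw [hXdef]
    have : (k:ℝ) ≤ n := by exact_mod_cast (show k ≤ n by omega)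
    exact Real.logb_le_logb_of_le (by norm_num) hkR this
  have hmR0 : (0:ℝ) ≤ m := by positivity
  have hstep : 2*(m:ℝ) * Real.logb 2 k ≥ ((n:ℝ) - 2*(n:ℝ)/X) * (2*(X - Y - 2)) := by
    have hXY2 : (0:ℝ) ≤ X - Y - 2 := by linarith
    have hnX : (0:ℝ) ≤ (n:ℝ) - 2*(n:ℝ)/X := by
      have : 2*(n:ℝ)/X ≤ (n:ℝ) := by
        rw [div_le_iff₀ hXpos]
        nlinarith
      linarith
    have s1 := mul_le_mul_of_nonneg_right hmX (by linarith : (0:ℝ) ≤ 2*(X-Y-2))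
    have s2 := mul_le_mul_of_nonneg_left
      (by linarith : 2*(X-Y-2) ≤ 2*Real.logb 2 (k:ℝ)) hmR0
    exact ge_iff_le.mpr (by nlinarith [s1, s2])
  have hdiv : 2*(n:ℝ)/X * (2*(X - Y - 2)) ≤ 4*(n:ℝ) := by
    have h1 : 2*(n:ℝ)/X * (2*(X - Y - 2)) ≤ 2*(n:ℝ)/X * (2*X) := by
      apply mul_le_mul_of_nonneg_left ?_ (by positivity)
      nlinarith
    have h2 : 2*(n:ℝ)/X * (2*X) = 4*(n:ℝ) := by
      field_simp
      ring
    linarith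
  have hfinal : Real.logb 2 A ≥ (n:ℝ)*X - 2*(n:ℝ)*Y - 8*(n:ℝ) := by
    rw [hlog2] at hlog1
    have e1 : Real.logb 2 A ≥ 2*(m:ℝ) * Real.logb 2 k - (n:ℝ)*X := by
      linarith
    have e2 : ((n:ℝ) - 2*(n:ℝ)/X) * (2*(X - Y - 2))
        = (n:ℝ)*2*X - (n:ℝ)*2*Y - 4*(n:ℝ) - 2*(n:ℝ)/X * (2*(X - Y - 2)) := by ring
    linarith [hstep, hdiv]
  have hlast : (n:ℝ)*X - 2*(n:ℝ)*Y - 8*(n:ℝ) ≥ (n:ℝ)*X - 10*(n:ℝ)*Y := by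
    nlinarith [mul_le_mul_of_nonneg_left hY1 (by positivity : (0:ℝ) ≤ 8*(n:ℝ))]
  calc Real.logb 2 A ≥ (n:ℝ)*X - 2*(n:ℝ)*Y - 8*(n:ℝ) := hfinal
    _ ≥ (n:ℝ)*X - 10*(n:ℝ)*Y := hlast
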